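/- Suppose T ∈ M_3(ℂ) has distinct eigenvalues λ_1, λ_2, λ_3 with corresponding unit eigenvectors x_1, x_2, x_3, and let y_1, y_2, y_3 be unit eigenvectors of T* corresponding to conj(λ_1), conj(λ_2), conj(λ_3). Let X = (x_1 | x_2 | x_3) be the 3×3 matrix with columns x_1, x_2, x_3. If |⟨x_i, x_j⟩| = |⟨y_i, y_j⟩| for all 1 ≤ i < j ≤ 3, then det(X*X) = (1 − |⟨x_1, x_2⟩|²)(1 − |⟨x_2, x_3⟩|²)(1 − |⟨x_3, x_1⟩|²). -/

import Mathlib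

open Matrix

/-- The standard Hermitian inner product on `ℂⁿ`, linear in the first slot. -/
noncomputable def hinner {n : ℕ} (x y : Fin n → ℂ) : ℂ := ∑ i, x i * (starRingEnd ℂ) (y i)



lemma hinner_mulVec {n : ℕ} (M : Matrix (Fin n) (Fin n) ℂ) (v w : Fin n → ℂ) :
    hinner (M.mulVec v) w = hinner v (Mᴴ.mulVec w) := by
  simp only [hinner, mulVec, dotProduct, conjTranspose_apply, map_sum, _root_.map_mul,
    Complex.conj_conj, Finset.sum_mul, Finset.mul_sum]
  rw [Finset.sum_comm]
  exact Finset.sum_congr rfl fun i _ => Finset.sum_congr rfl fun j _ => by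
    simp only [RCLike.star_def, Complex.conj_conj]; ring

lemma hinner_smul_left {n : ℕ} (c : ℂ) (v w : Fin n → ℂ) :
    hinner (c • v) w = c * hinner v w := by
  simp [hinner, Finset.mul_sum, mul_assoc]

lemma hinner_smul_right {n : ℕ} (c : ℂ) (v w : Fin n → ℂ) :
    hinner v (c • w) = (starRingEnd ℂ) c * hinner v w := by
  simp only [hinner, Pi.smul_apply, smul_eq_mul, _root_.map_mul, Finset.mul_sum]
  exact Finset.sum_congr rfl fun i _ => by ring

lemma hinner_conj_symm {n : ℕ} (v w : Fin n → ℂ) :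
    hinner w v = (starRingEnd ℂ) (hinner v w) := by
  simp only [hinner, map_sum, _root_.map_mul, Complex.conj_conj]
  exact Finset.sum_congr rfl fun i _ => by ring

lemma diag_entry_eq (G D YY : Matrix (Fin 3) (Fin 3) ℂ) (d : ℂ)
    (hkey : d • YY = Dᴴ * G.adjugate * D)
    (hoff : ∀ i j, i ≠ j → D i j = 0) (i j : Fin 3) :
    d * YY i j = (starRingEnd ℂ) (D i i) * G.adjugate i j * D j j := by
  have hDdiag : D = Matrix.diagonal (fun k => D k k) := by
    ext k l
    by_cases h : k = l
    · subst h; simp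
    · rw [Matrix.diagonal_apply_ne _ h, hoff k l h]
  have e := congrFun (congrFun hkey i) j
  rw [hDdiag, Matrix.diagonal_conjTranspose, Matrix.mul_assoc] at e
  simp only [Matrix.smul_apply, smul_eq_mul, Matrix.diagonal_mul, Matrix.mul_diagonal,
    Pi.star_apply, RCLike.star_def] at e
  rw [e]; ring

theorem det_gram_of_weak_angle_test (T : Matrix (Fin 3) (Fin 3) ℂ)
    (lam : Fin 3 → ℂ) (x y : Fin 3 → Fin 3 → ℂ)
    (hlam : Function.Injective lam)
    (hx : ∀ i, T.mulVec (x i) = lam i • x i)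
    (hxu : ∀ i, hinner (x i) (x i) = 1)
    (hy : ∀ i, Tᴴ.mulVec (y i) = (starRingEnd ℂ) (lam i) • y i)
    (hyu : ∀ i, hinner (y i) (y i) = 1)
    (X : Matrix (Fin 3) (Fin 3) ℂ)
    (hX : X = Matrix.of fun i j => x j i)
    (hwat : ∀ i j : Fin 3, i < j →
      ‖hinner (x i) (x j)‖ = ‖hinner (y i) (y j)‖) :
    (Xᴴ * X).det
      = (((1 - ‖hinner (x 0) (x 1)‖ ^ 2) *
          (1 - ‖hinner (x 1) (x 2)‖ ^ 2) *
          (1 - ‖hinner (x 2) (x 0)‖ ^ 2) : ℝ) : ℂ) := by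
  -- biorthogonality
  have hbi : ∀ i j, i ≠ j → hinner (x i) (y j) = 0 := by
    intro i j hij
    have h1 : lam i * hinner (x i) (y j) = lam j * hinner (x i) (y j) := by
      have := hinner_mulVec T (x i) (y j)
      rw [hx i, hy j, hinner_smul_left, hinner_smul_right, Complex.conj_conj] at this
      exact this
    have h2 : (lam i - lam j) * hinner (x i) (y j) = 0 := by ring_nf; linear_combination h1
    rcases mul_eq_zero.1 h2 with h | h
    · exact absurd (hlam (sub_eq_zero.1 h)) hij
    · exact h
  -- X is invertible
  have hxne : ∀ i, x i ≠ 0 := by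
    intro i h
    have := hxu i
    rw [h] at this
    simp [hinner] at this
  have hli : LinearIndependent ℂ x := by
    apply Module.End.eigenvectors_linearIndependent' (Matrix.mulVecLin T) lam hlam x
    intro i
    refine ⟨Module.End.mem_eigenspace_iff.2 ?_, hxne i⟩
    simpa using hx i
  have hXu : IsUnit X := by
    rw [← Matrix.linearIndependent_cols_iff_isUnit]
    convert hli using 1
    ext j i
    simp [hX]
    rfl
  -- matrices Y, D, G
  set Y : Matrix (Fin 3) (Fin 3) ℂ := Matrix.of fun i j => y j i with hY
  set D : Matrix (Fin 3) (Fin 3) ℂ := Xᴴ * Y with hD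
  have hent : ∀ (u v : Fin 3 → Fin 3 → ℂ) (i j : Fin 3),
      ((Matrix.of fun i j => u j i)ᴴ * (Matrix.of fun i j => v j i)) i j
        = (starRingEnd ℂ) (hinner (u i) (v j)) := by
    intro u v i j
    simp only [Matrix.mul_apply, conjTranspose_apply, Matrix.of_apply, hinner, map_sum,
      _root_.map_mul, Complex.conj_conj, RCLike.star_def]
  have hDe : ∀ i j, D i j = (starRingEnd ℂ) (hinner (x i) (y j)) := by
    intro i j; rw [hD, hX, hY]; exact hent x y i j
  have hYe : ∀ i j, (Yᴴ * Y) i j = (starRingEnd ℂ) (hinner (y i) (y j)) := by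
    intro i j; rw [hY]; exact hent y y i j
  have hGe : ∀ i j, (Xᴴ * X) i j = (starRingEnd ℂ) (hinner (x i) (x j)) := by
    intro i j; rw [hX]; exact hent x x i j
  have hkey : (Xᴴ*X).det • (Yᴴ * Y) = Dᴴ * (Xᴴ*X).adjugate * D := by
    rw [hD, conjTranspose_mul, conjTranspose_conjTranspose, adjugate_mul_distrib, det_mul]
    calc (Xᴴ.det * X.det) • (Yᴴ * Y)
        = Yᴴ * ((X * X.adjugate) * (Xᴴ.adjugate * Xᴴ)) * Y := by
          rw [mul_adjugate, adjugate_mul]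
          simp [Matrix.smul_mul, Matrix.mul_smul, smul_smul, mul_comm]
      _ = Yᴴ * X * (X.adjugate * Xᴴ.adjugate) * (Xᴴ * Y) := by
          simp only [Matrix.mul_assoc]
  -- scalar abbreviations
  set d : ℂ := (Xᴴ*X).det with hd
  set a : ℂ := hinner (x 0) (x 1) with ha
  set b : ℂ := hinner (x 0) (x 2) with hb
  set c : ℂ := hinner (x 1) (x 2) with hc
  -- Gram entries
  have hG00 : (Xᴴ*X) 0 0 = 1 := by rw [hGe, hxu, _root_.map_one]
  have hG11 : (Xᴴ*X) 1 1 = 1 := by rw [hGe, hxu, _root_.map_one]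
  have hG22 : (Xᴴ*X) 2 2 = 1 := by rw [hGe, hxu, _root_.map_one]
  have hG01 : (Xᴴ*X) 0 1 = (starRingEnd ℂ) a := by rw [hGe, ha]
  have hG02 : (Xᴴ*X) 0 2 = (starRingEnd ℂ) b := by rw [hGe, hb]
  have hG12 : (Xᴴ*X) 1 2 = (starRingEnd ℂ) c := by rw [hGe, hc]
  have hG10 : (Xᴴ*X) 1 0 = a := by
    rw [hGe, hinner_conj_symm, Complex.conj_conj, ha]
  have hG20 : (Xᴴ*X) 2 0 = b := by
    rw [hGe, hinner_conj_symm, Complex.conj_conj, hb]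
  have hG21 : (Xᴴ*X) 2 1 = c := by
    rw [hGe, hinner_conj_symm, Complex.conj_conj, hc]
  -- D off-diagonal entries vanish
  have dD10 : D 1 0 = 0 := by rw [hDe, hbi 1 0 (by decide), map_zero]
  have dD20 : D 2 0 = 0 := by rw [hDe, hbi 2 0 (by decide), map_zero]
  have dD01 : D 0 1 = 0 := by rw [hDe, hbi 0 1 (by decide), map_zero]
  have dD21 : D 2 1 = 0 := by rw [hDe, hbi 2 1 (by decide), map_zero]
  have dD02 : D 0 2 = 0 := by rw [hDe, hbi 0 2 (by decide), map_zero]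
  have dD12 : D 1 2 = 0 := by rw [hDe, hbi 1 2 (by decide), map_zero]
  set p : ℂ := D 0 0 with hp
  set q : ℂ := D 1 1 with hq
  set u : ℂ := hinner (y 0) (y 1) with hu
  -- entry equations
  have hoff : ∀ i j, i ≠ j → D i j = 0 := by
    intro i j h; rw [hDe, hbi i j h, map_zero]
  have E := diag_entry_eq (Xᴴ*X) D (Yᴴ*Y) d hkey hoff
  have hadj : ∀ i j, (Xᴴ*X).adjugate i j = !![(Xᴴ*X) 1 1 * (Xᴴ*X) 2 2 - (Xᴴ*X) 1 2 * (Xᴴ*X) 2 1,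
      -((Xᴴ*X) 0 1 * (Xᴴ*X) 2 2) + (Xᴴ*X) 0 2 * (Xᴴ*X) 2 1,
      (Xᴴ*X) 0 1 * (Xᴴ*X) 1 2 - (Xᴴ*X) 0 2 * (Xᴴ*X) 1 1;
      -((Xᴴ*X) 1 0 * (Xᴴ*X) 2 2) + (Xᴴ*X) 1 2 * (Xᴴ*X) 2 0,
      (Xᴴ*X) 0 0 * (Xᴴ*X) 2 2 - (Xᴴ*X) 0 2 * (Xᴴ*X) 2 0,
      -((Xᴴ*X) 0 0 * (Xᴴ*X) 1 2) + (Xᴴ*X) 0 2 * (Xᴴ*X) 1 0;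
      (Xᴴ*X) 1 0 * (Xᴴ*X) 2 1 - (Xᴴ*X) 1 1 * (Xᴴ*X) 2 0,
      -((Xᴴ*X) 0 0 * (Xᴴ*X) 2 1) + (Xᴴ*X) 0 1 * (Xᴴ*X) 2 0,
      (Xᴴ*X) 0 0 * (Xᴴ*X) 1 1 - (Xᴴ*X) 0 1 * (Xᴴ*X) 1 0] i j := by
    intro i j; rw [adjugate_fin_three]
  have e00 : d = (starRingEnd ℂ) p * (1 - (starRingEnd ℂ) c * c) * p := by
    have e := E 0 0
    rw [hYe, hyu, _root_.map_one, mul_one, hadj] at e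
    rw [e]
    simp only [Matrix.of_apply, Matrix.cons_val', Matrix.cons_val_zero, Matrix.empty_val',
      Matrix.cons_val_fin_one, Matrix.head_cons, Matrix.head_fin_const]
    rw [hG11, hG22, hG12, hG21, ← hp]
    ring
  have e11 : d = (starRingEnd ℂ) q * (1 - (starRingEnd ℂ) b * b) * q := by
    have e := E 1 1
    rw [hYe, hyu, _root_.map_one, mul_one, hadj] at e
    rw [e]
    simp only [Matrix.of_apply, Matrix.cons_val', Matrix.cons_val_zero, Matrix.cons_val_one,
      Matrix.empty_val', Matrix.cons_val_fin_one, Matrix.head_cons, Matrix.head_fin_const]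
    rw [hG00, hG22, hG02, hG20, ← hq]
    ring
  have e01 : d * (starRingEnd ℂ) u
      = (starRingEnd ℂ) p * (-((starRingEnd ℂ) a) + (starRingEnd ℂ) b * c) * q := by
    have e := E 0 1
    rw [hYe, ← hu, hadj] at e
    rw [e]
    simp only [Matrix.of_apply, Matrix.cons_val', Matrix.cons_val_zero, Matrix.cons_val_one,
      Matrix.empty_val', Matrix.cons_val_fin_one, Matrix.head_cons, Matrix.head_fin_const]
    rw [hG01, hG22, hG02, hG21, ← hp, ← hq]
    ring
  -- d is real and nonzero
  have hdstar : (starRingEnd ℂ) d = d := by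
    rw [hd]
    have h1 : ((Xᴴ*X)ᴴ).det = star (Xᴴ*X).det := Matrix.det_conjTranspose _
    rw [conjTranspose_mul, conjTranspose_conjTranspose, RCLike.star_def] at h1
    exact h1.symm
  have hdre : d = ((d.re : ℝ) : ℂ) := (Complex.conj_eq_iff_re.mp hdstar).symm
  have hXdet : X.det ≠ 0 := (Matrix.isUnit_iff_isUnit_det X).mp hXu |>.ne_zero
  have hdne : d ≠ 0 := by
    rw [hd, det_mul, det_conjTranspose]
    exact mul_ne_zero (star_ne_zero.mpr hXdet) hXdet
  set r : ℝ := d.re with hr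
  set Aa : ℝ := Complex.normSq a with hAa
  set Bb : ℝ := Complex.normSq b with hBb
  set Cc : ℝ := Complex.normSq c with hCc
  set P : ℝ := Complex.normSq p with hP
  set Q : ℝ := Complex.normSq q with hQ
  set s : ℝ := (a * (starRingEnd ℂ) b * c).re with hs
  have hrne : r ≠ 0 := by
    intro h0; apply hdne; rw [hdre, h0, Complex.ofReal_zero]
  have R1 : r = P * (1 - Cc) := by
    have h : d = ((P * (1 - Cc) : ℝ) : ℂ) := by
      rw [e00]
      calc (starRingEnd ℂ) p * (1 - (starRingEnd ℂ) c * c) * p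
          = (p * (starRingEnd ℂ) p) * 1 - (p * (starRingEnd ℂ) p) * (c * (starRingEnd ℂ) c) := by
            ring
        _ = _ := by rw [Complex.mul_conj, Complex.mul_conj, ← hP, ← hCc]; push_cast; ring
    rw [hdre] at h
    exact_mod_cast h
  have R2 : r = Q * (1 - Bb) := by
    have h : d = ((Q * (1 - Bb) : ℝ) : ℂ) := by
      rw [e11]
      calc (starRingEnd ℂ) q * (1 - (starRingEnd ℂ) b * b) * q
          = (q * (starRingEnd ℂ) q) * 1 - (q * (starRingEnd ℂ) q) * (b * (starRingEnd ℂ) b) := by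
            ring
        _ = _ := by rw [Complex.mul_conj, Complex.mul_conj, ← hQ, ← hBb]; push_cast; ring
    rw [hdre] at h
    exact_mod_cast h
  have hw : Complex.normSq (-((starRingEnd ℂ) a) + (starRingEnd ℂ) b * c)
      = Aa + Bb * Cc - 2 * s := by
    rw [hAa, hBb, hCc, hs]
    simp only [Complex.normSq_apply, Complex.add_re, Complex.add_im, Complex.neg_re,
      Complex.neg_im, Complex.mul_re, Complex.mul_im, Complex.conj_re, Complex.conj_im]
    ring
  have hU : Complex.normSq u = Aa := by
    rw [hAa, ← Complex.sq_norm u, ← Complex.sq_norm a, ha, hu, hwat 0 1 (by decide)]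
  have hDnorm : Complex.normSq d = r ^ 2 := by
    rw [hdre, Complex.normSq_ofReal]; ring
  have R3 : r ^ 2 * Aa = P * (Aa + Bb * Cc - 2 * s) * Q := by
    have h := congrArg Complex.normSq e01
    simp only [_root_.map_mul, Complex.normSq_conj] at h
    rw [hDnorm, hU, hw, ← hP, ← hQ] at h
    exact h
  have hPne : P ≠ 0 := by
    intro h0; apply hrne; rw [R1, h0, zero_mul]
  have hQne : Q ≠ 0 := by
    intro h0; apply hrne; rw [R2, h0, zero_mul]
  have key : Aa * (1 - Cc) * (1 - Bb) = Aa + Bb * Cc - 2 * s := by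
    have h : (P * Q) * (Aa * (1 - Cc) * (1 - Bb)) = (P * Q) * (Aa + Bb * Cc - 2 * s) := by
      calc (P * Q) * (Aa * (1 - Cc) * (1 - Bb)) = (P * (1 - Cc)) * (Q * (1 - Bb)) * Aa := by ring
        _ = r ^ 2 * Aa := by rw [← R1, ← R2]; ring
        _ = P * (Aa + Bb * Cc - 2 * s) * Q := R3
        _ = (P * Q) * (Aa + Bb * Cc - 2 * s) := by ring
    exact mul_left_cancel₀ (mul_ne_zero hPne hQne) h
  have hdc : r = 1 - Aa - Bb - Cc + 2 * s := by
    have h : d = ((1 - Aa - Bb - Cc + 2 * s : ℝ) : ℂ) := by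
      rw [hd, det_fin_three, hG00, hG01, hG02, hG10, hG11, hG12, hG20, hG21, hG22]
      rw [hAa, hBb, hCc, hs]
      apply Complex.ext <;>
        simp only [Complex.normSq_apply, Complex.add_re, Complex.add_im, Complex.sub_re,
          Complex.sub_im, Complex.mul_re, Complex.mul_im, Complex.one_re, Complex.one_im,
          Complex.conj_re, Complex.conj_im, Complex.neg_re, Complex.neg_im,
          Complex.ofReal_re, Complex.ofReal_im] <;>
        ring
    rw [hdre] at h
    exact_mod_cast h
  have hgoal : r = (1 - Aa) * (1 - Cc) * (1 - Bb) := by linear_combination hdc + key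
  have habs : ‖hinner (x 2) (x 0)‖ = ‖b‖ := by
    rw [hinner_conj_symm (x 0) (x 2), ← hb, Complex.norm_conj]
  rw [hdre]
  have hfin : r = (1 - ‖a‖ ^ 2) * (1 - ‖c‖ ^ 2)
      * (1 - ‖hinner (x 2) (x 0)‖ ^ 2) := by
    rw [hgoal, habs, hAa, hBb, hCc, ← Complex.sq_norm a, ← Complex.sq_norm b, ← Complex.sq_norm c]
  exact congrArg Complex.ofReal hfin
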